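/- Let p be an odd prime and a an integer with p/2 < a < p. Write x = a - (p-1)/2. Then the maximum of ∑_{i=1}^{p-1} ⌊√(bᵢ)⌋ over all tuples (b₁,…,b_{p-1}) of nonnegative integers with b₁+⋯+b_{p-1} ≤ 2a equals p - 1 + ⌊2x/3⌋. -/
import Mathlib

lemma sum_ite_fin (n k c d : ℕ) (h : k ≤ n) :
    ∑ i : Fin n, (if (i : ℕ) < k then c else d) = k * c + (n - k) * d := by
  rw [Fin.sum_univ_eq_sum_range (fun j => if j < k then c else d) n]
  rw [← Finset.sum_range_add_sum_Ico _ h]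
  have h1 : ∑ i ∈ Finset.range k, (if i < k then c else d) = k * c := by
    rw [Finset.sum_congr rfl (fun i hi => if_pos (Finset.mem_range.mp hi))]
    simp [mul_comm]
  have h2 : ∑ i ∈ Finset.Ico k n, (if i < k then c else d) = (n - k) * d := by
    rw [Finset.sum_congr rfl (fun i hi => if_neg (by
      have := (Finset.mem_Ico.mp hi).1; omega))]
    simp [mul_comm]
  rw [h1, h2]

lemma sqrt_key (b : ℕ) : 3 * Nat.sqrt b ≤ b + 2 := by
  have h := Nat.sqrt_le' b
  set s := Nat.sqrt b with hs
  rcases Nat.lt_or_ge s 2 with h2 | h2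
  · interval_cases s <;> omega
  · nlinarith

/-- The maximum of `∑_{i=1}^{p-1} ⌊√(bᵢ)⌋` over tuples of nonnegative integers
`b₁, …, b_{p-1}` with `b₁ + ⋯ + b_{p-1} ≤ 2a` equals `p - 1 + ⌊2x/3⌋`,
where `x = a - (p-1)/2`. -/
theorem max_sum_sqrt (p a : ℕ) (hp : p.Prime) (hodd : Odd p)
    (ha1 : p < 2 * a) (ha2 : a < p) :
    IsGreatest
      {s | ∃ b : Fin (p - 1) → ℕ, (∑ i, b i) ≤ 2 * a ∧ s = ∑ i, Nat.sqrt (b i)}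
      (p - 1 + 2 * (a - (p - 1) / 2) / 3) := by
  obtain ⟨m, hm⟩ := hodd
  have hm1 : 1 ≤ m := by
    have := hp.two_le; omega
  set x := a - (p - 1) / 2 with hx
  have hx1 : (p - 1) / 2 = m := by omega
  have hxa : 2 * a = (p - 1) + 2 * x := by omega
  set k := 2 * x / 3 with hk
  have hkn : k ≤ p - 1 := by omega
  constructor
  · refine ⟨fun i => if (i : ℕ) < k then 4 else 1, ?_, ?_⟩
    · rw [sum_ite_fin _ _ _ _ hkn]
      omega
    · have : ∀ i : Fin (p - 1),
          Nat.sqrt (if (i : ℕ) < k then 4 else 1) = if (i : ℕ) < k then 2 else 1 := by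
        intro i; split
        · rw [show (4:ℕ) = 2 * 2 from rfl]; exact Nat.sqrt_eq 2
        · exact Nat.sqrt_one
      rw [Finset.sum_congr rfl (fun i _ => this i), sum_ite_fin _ _ _ _ hkn]
      omega
  · rintro s ⟨b, hb, rfl⟩
    have hsum : 3 * ∑ i, Nat.sqrt (b i) ≤ (∑ i, b i) + 2 * (p - 1) := by
      rw [Finset.mul_sum]
      calc ∑ i, 3 * Nat.sqrt (b i) ≤ ∑ i, (b i + 2) :=
            Finset.sum_le_sum (fun i _ => sqrt_key (b i))
        _ = (∑ i, b i) + 2 * (p - 1) := by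
            rw [Finset.sum_add_distrib]; simp [mul_comm, Finset.card_univ]
    have h3 : 3 * ∑ i, Nat.sqrt (b i) ≤ 3 * (p - 1) + 2 * x := by omega
    omega
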